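/- If a finite simple graph G contains an induced theta, then G is not locally {S₃}-decomposable: there exist a vertex v, three pairwise non-adjacent vertices x, y, z in N(v), and a connected component C of G − N[v] such that each of x, y, z has a neighbor in C. -/
import Mathlib


open SimpleGraph

lemma reach_induce {V : Type*} {G : SimpleGraph V} {S : Set V} :
    ∀ {u w : V} (p : G.Walk u w), (∀ x ∈ p.support, x ∈ S) →
    ∀ (hu : u ∈ S) (hw : w ∈ S),
    (G.induce S).Reachable ⟨u, hu⟩ ⟨w, hw⟩ := by
  intro u w p
  induction p with
  | nil => intros; exact Reachable.refl _
  | @cons u v w h q ih =>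
    intro hp hu hw
    have hv : v ∈ S := hp v (by simp)
    have hadj : (G.induce S).Adj ⟨u, hu⟩ ⟨v, hv⟩ := h
    exact hadj.reachable.trans (ih (fun x hx => hp x (by simp [hx])) hv hw)


/-- `G` contains an induced theta: two non-adjacent vertices `a ≠ b` joined by three
paths, each of length at least 2, internally vertex-disjoint, such that the only
edges of `G` between vertices of the configuration are the edges of the paths
(so the union of any two of the paths induces a cycle). -/
def ContainsTheta {V : Type*} (G : SimpleGraph V) : Prop :=
  ∃ (a b : V) (P : Fin 3 → G.Walk a b),
    a ≠ b ∧ ¬ G.Adj a b ∧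
    (∀ i, (P i).IsPath ∧ 2 ≤ (P i).length) ∧
    (∀ i j, i ≠ j → ∀ w, w ∈ (P i).support → w ∈ (P j).support → w = a ∨ w = b) ∧
    (∀ u v : V, G.Adj u v → (∃ i, u ∈ (P i).support) → (∃ j, v ∈ (P j).support) →
      ∃ k, ((P k).toSubgraph).Adj u v)

/-- if `G` contains an induced theta, then `G` is not locally
`{S₃}`-decomposable: there exist a vertex `v`, three pairwise distinct non-adjacent
vertices `x, y, z` in `N(v)`, and a connected component `C` of `G − N[v]` such that
each of `x, y, z` has a neighbor in `C`. -/
theorem stmt_14 {V : Type*} [Fintype V] (G : SimpleGraph V)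
    (h : ContainsTheta G) :
    ∃ v x y z : V, G.Adj v x ∧ G.Adj v y ∧ G.Adj v z ∧
      x ≠ y ∧ y ≠ z ∧ x ≠ z ∧ ¬ G.Adj x y ∧ ¬ G.Adj y z ∧ ¬ G.Adj x z ∧
      ∃ C : (G.induce {w : V | ¬ (w = v ∨ G.Adj v w)}).ConnectedComponent,
        (∃ w : {w : V | ¬ (w = v ∨ G.Adj v w)},
          (G.induce {w : V | ¬ (w = v ∨ G.Adj v w)}).connectedComponentMk w = C ∧
          G.Adj x ↑w) ∧
        (∃ w : {w : V | ¬ (w = v ∨ G.Adj v w)},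
          (G.induce {w : V | ¬ (w = v ∨ G.Adj v w)}).connectedComponentMk w = C ∧
          G.Adj y ↑w) ∧
        (∃ w : {w : V | ¬ (w = v ∨ G.Adj v w)},
          (G.induce {w : V | ¬ (w = v ∨ G.Adj v w)}).connectedComponentMk w = C ∧
          G.Adj z ↑w) := by
  obtain ⟨a, b, P, hab, hnadj, hpath, hdisj, hind⟩ := h
  -- destructure each path into its first two edges
  have hD : ∀ i : Fin 3, ∃ (x y : V) (h1 : G.Adj a x) (h2 : G.Adj x y) (q : G.Walk y b),
      P i = Walk.cons h1 (Walk.cons h2 q) := by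
    intro i
    obtain ⟨x, h1, p1, hp1⟩ := Walk.exists_eq_cons_of_ne hab (P i)
    have hxb : x ≠ b := by rintro rfl; exact hnadj h1
    obtain ⟨yy, h2, p2, hp2⟩ := Walk.exists_eq_cons_of_ne hxb p1
    exact ⟨x, yy, h1, h2, p2, by rw [hp1, hp2]⟩
  choose x y h1 h2 q hPq using hD
  have hsupp : ∀ i, (P i).support = a :: x i :: (q i).support := by
    intro i; rw [hPq i]; simp
  have hnd : ∀ i, ((P i).support).Nodup := fun i => (hpath i).1.support_nodup
  have hanq : ∀ i, a ∉ (q i).support := by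
    intro i hm
    have hn := hnd i; rw [hsupp i, List.nodup_cons] at hn
    exact hn.1 (by simp [hm])
  have hxnq : ∀ i, x i ∉ (q i).support := by
    intro i hm
    have hn := hnd i; rw [hsupp i, List.nodup_cons, List.nodup_cons] at hn
    exact hn.2.1 hm
  have hxa : ∀ i, x i ≠ a := fun i => (h1 i).ne'
  have hxb : ∀ i, x i ≠ b := by rintro i rfl; exact hnadj (h1 i)
  have hxmem : ∀ i, x i ∈ (P i).support := by intro i; rw [hsupp i]; simp
  have hqmem : ∀ i, ∀ w ∈ (q i).support, w ∈ (P i).support := by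
    intro i w hw; rw [hsupp i]; simp [hw]
  -- distinctness
  have hxne : ∀ i j, i ≠ j → x i ≠ x j := by
    intro i j hij he
    rcases hdisj i j hij (x i) (hxmem i) (he ▸ hxmem j) with h' | h'
    · exact hxa i h'
    · exact hxb i h'
  -- a's only theta-neighbours are the x i
  have keyA : ∀ w, G.Adj a w → (∃ j, w ∈ (P j).support) → ∃ k, w = x k ∧ w ∈ (P k).support := by
    intro w had hj
    obtain ⟨k, hk⟩ := hind a w had ⟨0, (P 0).start_mem_support⟩ hj
    have hwk : w ∈ (P k).support := by
      rw [← Walk.mem_verts_toSubgraph]; exact hk.snd_mem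
    refine ⟨k, ?_, hwk⟩
    rw [hPq k] at hk
    simp only [Walk.toSubgraph, Subgraph.sup_adj] at hk
    rcases hk with hk | hk | hk
    · simp only [subgraphOfAdj_adj] at hk
      rcases Sym2.eq_iff.mp hk with ⟨-, rfl⟩ | ⟨-, hq⟩
      · rfl
      · exact absurd hq (hxa k)
    · exfalso
      have hm := hk.fst_mem
      simp only [subgraphOfAdj_verts, Set.mem_insert_iff, Set.mem_singleton_iff] at hm
      rcases hm with h' | h'
      · exact hxa k h'.symm
      · exact hanq k (by rw [h']; exact (q k).start_mem_support)
    · exfalso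
      have : a ∈ (q k).support := by
        rw [← Walk.mem_verts_toSubgraph]; exact hk.fst_mem
      exact hanq k this
  -- non-adjacency among the x i
  have hxnadj : ∀ i j, i ≠ j → ¬ G.Adj (x i) (x j) := by
    intro i j hij had
    obtain ⟨k, hk⟩ := hind _ _ had ⟨i, hxmem i⟩ ⟨j, hxmem j⟩
    have hik : x i ∈ (P k).support := by
      rw [← Walk.mem_verts_toSubgraph]; exact hk.fst_mem
    have hjk : x j ∈ (P k).support := by
      rw [← Walk.mem_verts_toSubgraph]; exact hk.snd_mem
    have hki : k = i := by
      by_contra hne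
      rcases hdisj k i (Ne.symm (fun e => hne e.symm)) (x i) hik (hxmem i) with h' | h'
      · exact hxa i h'
      · exact hxb i h'
    have hkj : k = j := by
      by_contra hne
      rcases hdisj k j (Ne.symm (fun e => hne e.symm)) (x j) hjk (hxmem j) with h' | h'
      · exact hxa j h'
      · exact hxb j h'
    exact hij (hki ▸ hkj)
  -- the tails avoid N[a]
  set S : Set V := {w : V | ¬ (w = a ∨ G.Adj a w)} with hSdef
  have hqS : ∀ i, ∀ w ∈ (q i).support, w ∈ S := by
    intro i w hw
    rintro (rfl | had)
    · exact hanq i hw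
    · obtain ⟨k, rfl, hwk⟩ := keyA w had ⟨i, hqmem i w hw⟩
      by_cases hki : k = i
      · exact hxnq i (hki ▸ hw)
      · rcases hdisj i k (fun e => hki e.symm) (x k) (hqmem i _ hw) (hxmem k) with h' | h'
        · exact hxa k h'
        · exact hxb k h'
  have hbS : b ∈ S := by rintro (rfl | had); exacts [hab rfl, hnadj had]
  have hyS : ∀ i, y i ∈ S := fun i => hqS i (y i) (q i).start_mem_support
  refine ⟨a, x 0, x 1, x 2, h1 0, h1 1, h1 2,
    hxne 0 1 (by decide), hxne 1 2 (by decide), hxne 0 2 (by decide),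
    hxnadj 0 1 (by decide), hxnadj 1 2 (by decide), hxnadj 0 2 (by decide),
    (G.induce S).connectedComponentMk ⟨b, hbS⟩, ?_, ?_, ?_⟩ <;>
  · refine ⟨⟨y _, hyS _⟩, ?_, h2 _⟩
    exact ConnectedComponent.sound (reach_induce (q _) (hqS _) (hyS _) hbS)
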